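/- Let (V̄, Ē) be a finite oriented graph with vertex set V̄ partitioned into internal vertices V and boundary vertices ∂V, edge set Ē = E ∪ ∂E, and boundary temperatures T_j > 0 for j ∈ ∂V. For every bounded measurable function g : ℝ₊^V̄ → ℝ, every X ∈ ℝ₊^V̄ with all coordinates strictly positive, and every T ∈ ℝ₊^V̄ with T_j equal to the boundary temperature for each j ∈ ∂V, one has L^{X,T}(g ∘ π)(X,T) = (L^ζ g)(X ∘ T), where π(X,T) = X ∘ T := (X_i T_i)_{i∈V̄} is the Hadamard product. In particular, the ζ := X∘T marginal of the joint process is a Markov process with generator L^ζ (the KMP generator with boundary conditions T_{∂V}). -/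

import Mathlib

open MeasureTheory Finset

noncomputable section

/-- Update two coordinates of a configuration. -/
def upd2 {V : Type*} [DecidableEq V] {α : Type*} (x : V → α) (i j : V) (a b : α) : V → α :=
  Function.update (Function.update x i a) j b

/-- The KMP generator with boundary conditions `T` on the graph with internal edges `Eint`
and boundary edges `Ebd`. -/
noncomputable def Lzeta {V : Type*} [Fintype V] [DecidableEq V]
    (Eint Ebd : Finset (V × V)) (T : V → ℝ)
    (g : (V → ℝ) → ℝ) (ζ : V → ℝ) : ℝ :=
  (∑ e ∈ Eint, ∫ u in (0:ℝ)..1,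
      (g (upd2 ζ e.1 e.2 (u * (ζ e.1 + ζ e.2)) ((1 - u) * (ζ e.1 + ζ e.2))) - g ζ))
  + ∑ e ∈ Ebd, ∫ u in (0:ℝ)..1, ∫ b in Set.Ioi (0:ℝ),
      Real.exp (-b) * (g (upd2 ζ e.1 e.2 (u * (ζ e.1 + ζ e.2)) (b * T e.2)) - g ζ)

/-- Generator of the joint KMP-temperature process `(X, T)`. -/
noncomputable def LXT {V : Type*} [Fintype V] [DecidableEq V]
    (Eint Ebd : Finset (V × V))
    (f : (V → ℝ) × (V → ℝ) → ℝ) (p : (V → ℝ) × (V → ℝ)) : ℝ :=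
  (∑ e ∈ Eint, ∫ u in (0:ℝ)..1,
      (f (upd2 p.1 e.1 e.2 (u * (p.1 e.1 + p.1 e.2)) ((1 - u) * (p.1 e.1 + p.1 e.2)),
          upd2 p.2 e.1 e.2
            ((p.1 e.1 * p.2 e.1 + p.1 e.2 * p.2 e.2) / (p.1 e.1 + p.1 e.2))
            ((p.1 e.1 * p.2 e.1 + p.1 e.2 * p.2 e.2) / (p.1 e.1 + p.1 e.2)))
        - f p))
  + ∑ e ∈ Ebd, ∫ b in Set.Ioi (0:ℝ), Real.exp (-b) * ∫ u in (0:ℝ)..1,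
      (f (upd2 p.1 e.1 e.2 (u * (p.1 e.1 + p.1 e.2)) b,
          Function.update p.2 e.1
            ((p.1 e.1 * p.2 e.1 + p.1 e.2 * p.2 e.2) / (p.1 e.1 + p.1 e.2)))
        - f p)

lemma swap_aux {V : Type*} [Fintype V] [DecidableEq V]
    (g : (V → ℝ) → ℝ) (hgm : Measurable g) (C : ℝ) (hgb : ∀ ζ, |g ζ| ≤ C)
    (ζ : V → ℝ) (i j : V) (s t : ℝ) :
    ∫ b in Set.Ioi (0:ℝ), Real.exp (-b) * ∫ u in (0:ℝ)..1,
        (g (upd2 ζ i j (u * s) (b * t)) - g ζ)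
      = ∫ u in (0:ℝ)..1, ∫ b in Set.Ioi (0:ℝ),
          Real.exp (-b) * (g (upd2 ζ i j (u * s) (b * t)) - g ζ) := by
  have hC : 0 ≤ C := le_trans (abs_nonneg _) (hgb ζ)
  have hconf : Measurable fun p : ℝ × ℝ => upd2 ζ i j (p.1 * s) (p.2 * t) := by
    apply measurable_pi_lambda
    intro k
    simp only [upd2, Function.update_apply]
    rcases eq_or_ne k j with h | h
    · simpa only [if_pos h] using measurable_snd.mul_const t
    rcases eq_or_ne k i with h2 | h2
    · simpa only [if_neg h, if_pos h2] using measurable_fst.mul_const s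
    · simpa only [if_neg h, if_neg h2] using measurable_const
  have hF : Measurable fun p : ℝ × ℝ =>
      Real.exp (-p.2) * (g (upd2 ζ i j (p.1 * s) (p.2 * t)) - g ζ) :=
    (Real.measurable_exp.comp measurable_snd.neg).mul ((hgm.comp hconf).sub measurable_const)
  have hexp : IntegrableOn (fun b : ℝ => Real.exp (-b)) (Set.Ioi (0:ℝ)) := by
    simpa using exp_neg_integrableOn_Ioi (0:ℝ) one_pos
  have hint : Integrable (Function.uncurry fun b u =>
        Real.exp (-b) * (g (upd2 ζ i j (u * s) (b * t)) - g ζ))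
      ((volume.restrict (Set.Ioi (0:ℝ))).prod (volume.restrict (Set.Ioc (0:ℝ) 1))) := by
    apply Integrable.mono' (g := fun p : ℝ × ℝ => Real.exp (-p.1) * (2 * C))
    · exact Integrable.mul_prod hexp ((integrableOn_const_iff).2 (Or.inr (by simp)))
    · exact (hF.comp measurable_swap).aestronglyMeasurable
    · filter_upwards with p
      rw [Function.uncurry, Real.norm_eq_abs, abs_mul, abs_of_pos (Real.exp_pos _)]
      gcongr
      calc |g (upd2 ζ i j (p.2 * s) (p.1 * t)) - g ζ|
          ≤ |g (upd2 ζ i j (p.2 * s) (p.1 * t))| + |g ζ| := abs_sub _ _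
        _ ≤ C + C := add_le_add (hgb _) (hgb _)
        _ = 2 * C := by ring
  simp_rw [← intervalIntegral.integral_const_mul, intervalIntegral.integral_of_le zero_le_one]
  exact integral_integral_swap hint


/-- the `ζ = X ∘ T` (Hadamard product) marginal of the joint KMP-temperature
process is Markov with generator the KMP generator with boundary conditions `T`. -/
theorem lxt_hadamard_eq_lzeta
    {V : Type*} [Fintype V] [DecidableEq V]
    (bd : Finset V) (Eint Ebd : Finset (V × V)) (T : V → ℝ)
    (hE : ∀ e ∈ Eint, e.1 ∉ bd ∧ e.2 ∉ bd ∧ e.1 ≠ e.2)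
    (hEb : ∀ e ∈ Ebd, e.1 ∉ bd ∧ e.2 ∈ bd)
    (hT : ∀ j ∈ bd, 0 < T j)
    (g : (V → ℝ) → ℝ) (hgm : Measurable g) (hgb : ∃ C, ∀ ζ, |g ζ| ≤ C)
    (X Θ : V → ℝ) (hX : ∀ i, 0 < X i) (hΘ : ∀ i, 0 ≤ Θ i)
    (hΘbd : ∀ j ∈ bd, Θ j = T j) :
    LXT Eint Ebd (fun p => g (fun i => p.1 i * p.2 i)) (X, Θ)
      = Lzeta Eint Ebd T g (fun i => X i * Θ i) := by
  obtain ⟨C, hgC⟩ := hgb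
  simp only [LXT, Lzeta]
  congr 1
  · refine Finset.sum_congr rfl fun e he => ?_
    obtain ⟨hi, hj, hij⟩ := hE e he
    have hne : X e.1 + X e.2 ≠ 0 := (add_pos (hX e.1) (hX e.2)).ne'
    congr 1
    funext u
    congr 2
    funext k
    simp only [upd2, Function.update_apply]
    rcases eq_or_ne k e.2 with h | h
    · simp only [if_pos h]
      field_simp
    rcases eq_or_ne k e.1 with h2 | h2
    · simp only [if_neg h, if_pos h2]
      field_simp
    · simp only [if_neg h, if_neg h2]
  · refine Finset.sum_congr rfl fun e he => ?_
    obtain ⟨hi, hj⟩ := hEb e he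
    have hij : e.1 ≠ e.2 := fun h => hi (h ▸ hj)
    have hne : X e.1 + X e.2 ≠ 0 := (add_pos (hX e.1) (hX e.2)).ne'
    have key : ∀ b u : ℝ,
        (fun k => upd2 X e.1 e.2 (u * (X e.1 + X e.2)) b k *
          Function.update Θ e.1
            ((X e.1 * Θ e.1 + X e.2 * Θ e.2) / (X e.1 + X e.2)) k)
        = upd2 (fun i => X i * Θ i) e.1 e.2
            (u * (X e.1 * Θ e.1 + X e.2 * Θ e.2)) (b * T e.2) := by
      intro b u
      funext k
      simp only [upd2, Function.update_apply]
      rcases eq_or_ne k e.2 with h | h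
      · simp only [if_pos h, if_neg (h ▸ (Ne.symm hij) : k ≠ e.1)]
        rw [h, hΘbd e.2 hj]
      rcases eq_or_ne k e.1 with h2 | h2
      · simp only [if_neg h, if_pos h2]
        field_simp
      · simp only [if_neg h, if_neg h2]
    simp_rw [key]
    exact swap_aux g hgm C hgC (fun i => X i * Θ i) e.1 e.2
      (X e.1 * Θ e.1 + X e.2 * Θ e.2) (T e.2)

end
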